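/- Strengthened automaton soundness (induction invariant of the Program Automaton Soundness proof): for every NetKAT program p whose dup labels are pairwise distinct, every state ℓ ∈ S of A(p), all packets pk_in, pk₁, …, pk_n (n ≥ 0), pk_out, and every list of packets h', the history (pk_out :: pk_n :: ⋯ :: pk₁) ++ h' (just pk_out :: h' when n = 0) belongs to ⟦k_ℓ⟧ (pk_in :: h') if and only if accept ℓ (pk_in, [pk₁, …, pk_n], pk_out) holds. -/

import Mathlib

namespace NetKAT

/-- Packets: assignments of (natural-number) values to fields. -/
abbrev Packet (F : Type) := F → ℕ

/-- Histories: a nonempty list of packets, represented as (head packet, tail). -/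
abbrev Hist (F : Type) := Packet F × List (Packet F)

/-- NetKAT predicates. -/
inductive Pred (F : Type) where
  | id : Pred F
  | drop : Pred F
  | test : F → ℕ → Pred F
  | or : Pred F → Pred F → Pred F
  | and : Pred F → Pred F → Pred F
  | not : Pred F → Pred F
  deriving DecidableEq

/-- Labeled NetKAT programs: every occurrence of `dup` carries a label from `L`. -/
inductive LPol (F L : Type) where
  | filter : Pred F → LPol F L
  | mod : F → ℕ → LPol F L
  | union : LPol F L → LPol F L → LPol F L
  | seq : LPol F L → LPol F L → LPol F L
  | star : LPol F L → LPol F L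
  | dup : L → LPol F L
  deriving DecidableEq

/-- Iterates of a packet-processing function. -/
def iterRel {F : Type} (f : Hist F → Set (Hist F)) : ℕ → Hist F → Set (Hist F)
  | 0, h => {h}
  | i+1, h => ⋃ h' ∈ f h, iterRel f i h'

/-- Semantics of predicates (as filters on histories). -/
def predSem {F : Type} : Pred F → Hist F → Set (Hist F)
  | .id, h => {h}
  | .drop, _ => ∅
  | .test f n, h => if h.1 f = n then {h} else ∅
  | .or a b, h => predSem a h ∪ predSem b h
  | .and a b, h => ⋃ h' ∈ predSem a h, predSem b h'
  | .not a, h => {h} \ predSem a h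

/-- Semantics of labeled NetKAT programs (labels do not affect the semantics). -/
def polSem {F L : Type} [DecidableEq F] : LPol F L → Hist F → Set (Hist F)
  | .filter a, h => predSem a h
  | .mod f n, h => {(Function.update h.1 f n, h.2)}
  | .union p q, h => polSem p h ∪ polSem q h
  | .seq p q, h => ⋃ h' ∈ polSem p h, polSem q h'
  | .star p, h => ⋃ i : ℕ, iterRel (fun h' => polSem p h') i h
  | .dup _, h => {(h.1, h.1 :: h.2)}

/-- A program is dup-free if it contains no occurrence of `dup`. -/
def LPol.dupFree {F L : Type} : LPol F L → Prop
  | .filter _ => True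
  | .mod _ _ => True
  | .union p q => p.dupFree ∧ q.dupFree
  | .seq p q => p.dupFree ∧ q.dupFree
  | .star p => p.dupFree
  | .dup _ => False

/-- The list of dup labels occurring in a program. -/
def labelList {F L : Type} : LPol F L → List L
  | .filter _ => []
  | .mod _ _ => []
  | .union p q => labelList p ++ labelList q
  | .seq p q => labelList p ++ labelList q
  | .star p => labelList p
  | .dup l => [l]

variable {F L : Type} [DecidableEq F] [DecidableEq L]

/-- The local component `E⟦p⟧` of a program. -/
def EE : LPol F L → LPol F L
  | .filter a => .filter a
  | .mod f n => .mod f n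
  | .union q r => .union (EE q) (EE r)
  | .seq q r => .seq (EE q) (EE r)
  | .star q => .star (EE q)
  | .dup _ => .filter .drop

/-- The global components `D⟦p⟧` of a program: a finite set of triples `(d, ℓ, k)`. -/
def DD : LPol F L → Finset (LPol F L × L × LPol F L)
  | .filter _ => ∅
  | .mod _ _ => ∅
  | .union q r => DD q ∪ DD r
  | .seq q r =>
      (DD q).image (fun t => (t.1, t.2.1, LPol.seq t.2.2 r)) ∪
      (DD r).image (fun t => (LPol.seq (EE q) t.1, t.2.1, t.2.2))
  | .star q =>
      (DD q).image (fun t => (LPol.seq (EE (.star q)) t.1, t.2.1, LPol.seq t.2.2 (.star q)))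
  | .dup l => {(.filter .id, l, .filter .id)}

/-- Observation function of the automaton `A(p)`, given the continuation map `κ`
(state `none` is the initial state `0`, state `some ℓ` is the label `ℓ`):
`ε s pk = {pk' | [pk'] ∈ ⟦E⟦k_s⟧⟧ [pk]}`. -/
def obs (κ : Option L → LPol F L) (s : Option L) (pk : Packet F) : Set (Packet F) :=
  {pk' | ((pk', ([] : List (Packet F))) : Hist F) ∈
            polSem (EE (κ s)) ((pk, ([] : List (Packet F))) : Hist F)}

/-- Continuation function of the automaton `A(p)`, given the continuation map `κ`:
`δ s pk = {(pk', ℓ') | ∃ (d, ℓ', k) ∈ D⟦k_s⟧, [pk'] ∈ ⟦d⟧ [pk]}`. -/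
def trans (κ : Option L → LPol F L) (s : Option L) (pk : Packet F) :
    Set (Packet F × Option L) :=
  {q | ∃ l' d k, q.2 = some l' ∧ (d, l', k) ∈ DD (κ s) ∧
        ((q.1, ([] : List (Packet F))) : Hist F) ∈
          polSem d ((pk, ([] : List (Packet F))) : Hist F)}

/-- Acceptance of a guarded string `(pk_in, [pk₁, …, pk_n], pk_out)` from state `s`. -/
def accept (κ : Option L → LPol F L) :
    Option L → Packet F → List (Packet F) → Packet F → Prop
  | s, pkin, [], pkout => pkout ∈ obs κ s pkin
  | s, pkin, pk1 :: w, pkout =>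
      ∃ s', (pk1, s') ∈ trans κ s pkin ∧ accept κ s' pk1 w pkout

variable {F L : Type} [DecidableEq F] [DecidableEq L]
set_option linter.unusedSectionVars false

/-- Predicates as propositions on the head packet. -/
def predHolds : Pred F → Packet F → Prop
  | .id, _ => True
  | .drop, _ => False
  | .test f n, pk => pk f = n
  | .or a b, pk => predHolds a pk ∨ predHolds b pk
  | .and a b, pk => predHolds a pk ∧ predHolds b pk
  | .not a, pk => ¬ predHolds a pk

theorem pred_mem (a : Pred F) (h x : Hist F) :
    x ∈ predSem a h ↔ x = h ∧ predHolds a h.1 := by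
  induction a generalizing h x with
  | id => simp [predSem, predHolds]
  | drop => simp [predSem, predHolds]
  | test f n =>
      simp only [predSem, predHolds]
      by_cases hc : h.1 f = n <;> simp [hc]
  | or a b iha ihb =>
      simp only [predSem, Set.mem_union, iha, ihb, predHolds]; tauto
  | and a b iha ihb =>
      simp only [predSem, Set.mem_iUnion, exists_prop, iha, ihb, predHolds]
      constructor
      · rintro ⟨y, ⟨rfl, ha⟩, rfl, hb⟩
        exact ⟨rfl, ha, hb⟩
      · rintro ⟨rfl, ha, hb⟩
        exact ⟨_, ⟨rfl, ha⟩, rfl, hb⟩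
  | not a iha =>
      simp only [predSem, Set.mem_diff, Set.mem_singleton_iff, iha, predHolds]
      constructor
      · rintro ⟨rfl, hn⟩
        exact ⟨rfl, fun hc => hn ⟨rfl, hc⟩⟩
      · rintro ⟨rfl, hn⟩
        exact ⟨rfl, fun hc => hn hc.2⟩
set_option linter.unusedSectionVars false

theorem EE_dupFree (p : LPol F L) : (EE p).dupFree := by
  induction p <;> simp_all [EE, LPol.dupFree]

theorem DD_d_dupFree {p : LPol F L} {d : LPol F L} {l : L} {k : LPol F L}
    (hd : (d, l, k) ∈ DD p) : d.dupFree := by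
  induction p generalizing d l k with
  | filter a => simp [DD] at hd
  | mod f n => simp [DD] at hd
  | union q r ihq ihr =>
      simp only [DD, Finset.mem_union] at hd
      rcases hd with hd | hd
      exacts [ihq hd, ihr hd]
  | seq q r ihq ihr =>
      simp only [DD, Finset.mem_union, Finset.mem_image] at hd
      rcases hd with ⟨⟨d1, l1, k1⟩, ht, he⟩ | ⟨⟨d1, l1, k1⟩, ht, he⟩ <;> cases he
      · exact ihq ht
      · exact ⟨EE_dupFree q, ihr ht⟩
  | star q ihq =>
      simp only [DD, Finset.mem_image] at hd
      obtain ⟨⟨d1, l1, k1⟩, ht, he⟩ := hd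
      cases he
      exact ⟨EE_dupFree (.star q), ihq ht⟩
  | dup l' =>
      simp only [DD, Finset.mem_singleton] at hd
      cases hd
      trivial

theorem DD_label_mem {p : LPol F L} {d : LPol F L} {l : L} {k : LPol F L}
    (hd : (d, l, k) ∈ DD p) : l ∈ labelList p := by
  induction p generalizing d l k with
  | filter a => simp [DD] at hd
  | mod f n => simp [DD] at hd
  | union q r ihq ihr =>
      simp only [DD, Finset.mem_union] at hd
      simp only [labelList, List.mem_append]
      rcases hd with hd | hd
      exacts [Or.inl (ihq hd), Or.inr (ihr hd)]
  | seq q r ihq ihr =>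
      simp only [DD, Finset.mem_union, Finset.mem_image] at hd
      simp only [labelList, List.mem_append]
      rcases hd with ⟨⟨d1, l1, k1⟩, ht, he⟩ | ⟨⟨d1, l1, k1⟩, ht, he⟩ <;> cases he
      · exact Or.inl (ihq ht)
      · exact Or.inr (ihr ht)
  | star q ihq =>
      simp only [DD, Finset.mem_image] at hd
      obtain ⟨⟨d1, l1, k1⟩, ht, he⟩ := hd
      cases he
      exact ihq ht
  | dup l' =>
      simp only [DD, Finset.mem_singleton] at hd
      cases hd
      simp [labelList]
theorem DD_unique {p : LPol F L} (hnd : (labelList p).Nodup)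
    {d d' : LPol F L} {l : L} {k k' : LPol F L}
    (h1 : (d, l, k) ∈ DD p) (h2 : (d', l, k') ∈ DD p) : d = d' ∧ k = k' := by
  induction p generalizing d d' l k k' with
  | filter a => simp [DD] at h1
  | mod f n => simp [DD] at h1
  | union q r ihq ihr =>
      rw [labelList, List.nodup_append] at hnd
      obtain ⟨hq, hr, hdisj⟩ := hnd
      simp only [DD, Finset.mem_union] at h1 h2
      rcases h1 with h1 | h1 <;> rcases h2 with h2 | h2
      · exact ihq hq h1 h2
      · exact absurd rfl (hdisj _ (DD_label_mem h1) _ (DD_label_mem h2))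
      · exact absurd rfl (hdisj _ (DD_label_mem h2) _ (DD_label_mem h1))
      · exact ihr hr h1 h2
  | seq q r ihq ihr =>
      rw [labelList, List.nodup_append] at hnd
      obtain ⟨hq, hr, hdisj⟩ := hnd
      simp only [DD, Finset.mem_union, Finset.mem_image] at h1 h2
      rcases h1 with ⟨⟨d1, l1, k1⟩, ht1, he1⟩ | ⟨⟨d1, l1, k1⟩, ht1, he1⟩ <;>
        rcases h2 with ⟨⟨d2, l2, k2⟩, ht2, he2⟩ | ⟨⟨d2, l2, k2⟩, ht2, he2⟩ <;>
        cases he1 <;> cases he2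
      · obtain ⟨e1, e2⟩ := ihq hq ht1 ht2
        exact ⟨e1, by rw [e2]⟩
      · exact absurd rfl (hdisj _ (DD_label_mem ht1) _ (DD_label_mem ht2))
      · exact absurd rfl (hdisj _ (DD_label_mem ht2) _ (DD_label_mem ht1))
      · obtain ⟨e1, e2⟩ := ihr hr ht1 ht2
        exact ⟨by rw [e1], e2⟩
  | star q ihq =>
      rw [labelList] at hnd
      simp only [DD, Finset.mem_image] at h1 h2
      obtain ⟨⟨d1, l1, k1⟩, ht1, he1⟩ := h1
      obtain ⟨⟨d2, l2, k2⟩, ht2, he2⟩ := h2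
      cases he1; cases he2
      obtain ⟨e1, e2⟩ := ihq hnd ht1 ht2
      exact ⟨by rw [e1], by rw [e2]⟩
  | dup l' =>
      simp only [DD, Finset.mem_singleton] at h1 h2
      cases h1; cases h2
      exact ⟨rfl, rfl⟩

theorem DD_closure {p : LPol F L} {d : LPol F L} {l : L} {k : LPol F L}
    (hd : (d, l, k) ∈ DD p) {d' : LPol F L} {l' : L} {k' : LPol F L}
    (hd' : (d', l', k') ∈ DD k) : ∃ d'', (d'', l', k') ∈ DD p := by
  induction p generalizing d l k d' l' k' with
  | filter a => simp [DD] at hd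
  | mod f n => simp [DD] at hd
  | union q r ihq ihr =>
      simp only [DD, Finset.mem_union] at hd ⊢
      rcases hd with hd | hd
      · obtain ⟨d'', h⟩ := ihq hd hd'
        exact ⟨d'', Or.inl h⟩
      · obtain ⟨d'', h⟩ := ihr hd hd'
        exact ⟨d'', Or.inr h⟩
  | seq q r ihq ihr =>
      simp only [DD, Finset.mem_union, Finset.mem_image] at hd
      rcases hd with ⟨⟨d1, l1, k1⟩, ht, he⟩ | ⟨⟨d1, l1, k1⟩, ht, he⟩ <;> cases he
      · -- k = k1.seq r, so DD k = image of DD k1 ∪ image of DD r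
        simp only [DD, Finset.mem_union, Finset.mem_image] at hd'
        rcases hd' with ⟨⟨d2, l2, k2⟩, ht2, he2⟩ | ⟨⟨d2, l2, k2⟩, ht2, he2⟩ <;> cases he2
        · obtain ⟨d'', h⟩ := ihq ht ht2
          refine ⟨d'', ?_⟩
          simp only [DD, Finset.mem_union, Finset.mem_image]
          exact Or.inl ⟨(d'', l2, k2), by simpa using h, rfl⟩
        · refine ⟨LPol.seq (EE q) d2, ?_⟩
          simp only [DD, Finset.mem_union, Finset.mem_image]
          exact Or.inr ⟨(d2, l2, k2), by simpa using ht2, rfl⟩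
      · obtain ⟨d'', h⟩ := ihr ht hd'
        refine ⟨LPol.seq (EE q) d'', ?_⟩
        simp only [DD, Finset.mem_union, Finset.mem_image]
        exact Or.inr ⟨(d'', l', k'), h, rfl⟩
  | star q ihq =>
      simp only [DD, Finset.mem_image] at hd
      obtain ⟨⟨d1, l1, k1⟩, ht, he⟩ := hd
      cases he
      -- k = k1.seq (q*), DD k = image over DD k1 ∪ image over DD (q*)
      simp only [DD, Finset.mem_union, Finset.mem_image] at hd'
      rcases hd' with ⟨⟨d2, l2, k2⟩, ht2, he2⟩ | ⟨⟨d2, l2, k2⟩, ht2, he2⟩ <;> cases he2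
      · obtain ⟨d'', h⟩ := ihq ht ht2
        refine ⟨LPol.seq (EE (.star q)) d'', ?_⟩
        simp only [DD, Finset.mem_image]
        exact ⟨(d'', l2, k2), by simpa using h, rfl⟩
      · -- second component of DD (k1.seq (q*)) comes from DD (q*) itself
        obtain ⟨⟨d3, l3, k3⟩, ht3, he3⟩ := ht2
        cases he3
        exact ⟨_, by simp only [DD, Finset.mem_image]; exact ⟨(d3, l3, k3), ht3, rfl⟩⟩
  | dup l0 =>
      simp only [DD, Finset.mem_singleton] at hd
      cases hd
      simp [DD] at hd'
theorem iterRel_comp {f : Hist F → Set (Hist F)} {i j : ℕ} {h1 h2 h3 : Hist F}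
    (ha : h2 ∈ iterRel f i h1) (hb : h3 ∈ iterRel f j h2) :
    h3 ∈ iterRel f (i + j) h1 := by
  induction i generalizing h1 with
  | zero =>
      simp only [iterRel, Set.mem_singleton_iff] at ha
      subst ha
      simpa using hb
  | succ i ih =>
      simp only [iterRel, Set.mem_iUnion, exists_prop] at ha
      obtain ⟨y, hy, ha⟩ := ha
      have : i + 1 + j = (i + j) + 1 := by omega
      rw [this]
      simp only [iterRel, Set.mem_iUnion, exists_prop]
      exact ⟨y, hy, ih ha⟩

theorem mem_star_iff {q : LPol F L} {h x : Hist F} :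
    x ∈ polSem (.star q) h ↔ ∃ i, x ∈ iterRel (fun h' => polSem q h') i h := by
  simp [polSem]

theorem star_trans {q : LPol F L} {h1 h2 h3 : Hist F}
    (ha : h2 ∈ polSem (.star q) h1) (hb : h3 ∈ polSem (.star q) h2) :
    h3 ∈ polSem (.star q) h1 := by
  rw [mem_star_iff] at *
  obtain ⟨i, ha⟩ := ha; obtain ⟨j, hb⟩ := hb
  exact ⟨i + j, iterRel_comp ha hb⟩

theorem mem_star_self {q : LPol F L} {h : Hist F} : h ∈ polSem (.star q) h :=
  mem_star_iff.2 ⟨0, rfl⟩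

theorem mem_star_step {q : LPol F L} {h1 h2 h3 : Hist F}
    (ha : h2 ∈ polSem q h1) (hb : h3 ∈ polSem (.star q) h2) :
    h3 ∈ polSem (.star q) h1 := by
  rw [mem_star_iff] at *
  obtain ⟨j, hb⟩ := hb
  refine ⟨j + 1, ?_⟩
  have : j + 1 = 1 + j := by omega
  rw [this]
  exact iterRel_comp (i := 1) (by simpa [iterRel] using ha) hb

theorem mem_star_of_mem {q : LPol F L} {h1 h2 : Hist F} (ha : h2 ∈ polSem q h1) :
    h2 ∈ polSem (.star q) h1 :=
  mem_star_step ha mem_star_self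

theorem dupFree_tail {q : LPol F L} (hq : q.dupFree) :
    ∀ h x : Hist F, x ∈ polSem q h ↔
      x.2 = h.2 ∧ ((x.1, ([] : List (Packet F))) : Hist F) ∈ polSem q (h.1, ([] : List (Packet F))) := by
  induction q with
  | filter a =>
      intro h x
      simp only [polSem]
      rw [pred_mem, pred_mem]
      simp only [Prod.ext_iff]
      tauto
  | mod f n =>
      intro h x
      simp only [polSem, Set.mem_singleton_iff, Prod.ext_iff]
      tauto
  | union q r ihq ihr =>
      intro h x
      obtain ⟨h1, h2⟩ := hq
      simp only [polSem, Set.mem_union]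
      constructor
      · rintro (hx | hx)
        · rw [ihq h1] at hx; exact ⟨hx.1, Or.inl hx.2⟩
        · rw [ihr h2] at hx; exact ⟨hx.1, Or.inr hx.2⟩
      · rintro ⟨hx2, hx | hx⟩
        · exact Or.inl ((ihq h1 _ _).2 ⟨hx2, hx⟩)
        · exact Or.inr ((ihr h2 _ _).2 ⟨hx2, hx⟩)
  | seq q r ihq ihr =>
      intro h x
      obtain ⟨h1, h2⟩ := hq
      simp only [polSem, Set.mem_iUnion, exists_prop]
      constructor
      · rintro ⟨y, hy, hx⟩
        rw [ihq h1] at hy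
        rw [ihr h2] at hx
        exact ⟨hx.1.trans hy.1, ⟨(y.1, []), hy.2, (ihr h2 _ _).2 ⟨rfl, hx.2⟩⟩⟩
      · rintro ⟨hx2, y, hy, hx⟩
        rw [ihq h1] at hy
        rw [ihr h2] at hx
        refine ⟨(y.1, h.2), (ihq h1 _ _).2 ⟨rfl, ?_⟩, (ihr h2 _ _).2 ⟨by simpa using hx2, hx.2⟩⟩
        simpa [← hy.1] using hy.2
  | star q ihq =>
      have hiter : ∀ i (h x : Hist F), x ∈ iterRel (fun h' => polSem q h') i h ↔
          x.2 = h.2 ∧ ((x.1, ([] : List (Packet F))) : Hist F) ∈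
            iterRel (fun h' => polSem q h') i (h.1, ([] : List (Packet F))) := by
        intro i
        induction i with
        | zero =>
            intro h x
            simp [iterRel, Prod.ext_iff]
            tauto
        | succ i ih =>
            intro h x
            simp only [iterRel, Set.mem_iUnion, exists_prop]
            constructor
            · rintro ⟨y, hy, hx⟩
              rw [ihq hq] at hy
              rw [ih] at hx
              exact ⟨hx.1.trans hy.1, ⟨(y.1, []), hy.2, (ih _ _).2 ⟨rfl, hx.2⟩⟩⟩
            · rintro ⟨hx2, y, hy, hx⟩
              rw [ihq hq] at hy
              rw [ih] at hx
              refine ⟨(y.1, h.2), (ihq hq _ _).2 ⟨rfl, ?_⟩, (ih _ _).2 ⟨by simpa using hx2, hx.2⟩⟩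
              simpa [← hy.1] using hy.2
      intro h x
      simp only [polSem, Set.mem_iUnion]
      constructor
      · rintro ⟨i, hi⟩
        rw [hiter] at hi
        exact ⟨hi.1, i, hi.2⟩
      · rintro ⟨hx2, i, hi⟩
        exact ⟨i, (hiter i _ _).2 ⟨hx2, hi⟩⟩
  | dup l => exact absurd hq (by simp [LPol.dupFree])

theorem polSem_suffix {q : LPol F L} {h x : Hist F} (hx : x ∈ polSem q h) :
    h.2 <:+ x.2 := by
  induction q generalizing h x with
  | filter a =>
      rw [polSem, pred_mem] at hx
      rw [hx.1]
  | mod f n =>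
      rw [polSem, Set.mem_singleton_iff] at hx
      rw [hx]
  | union q r ihq ihr =>
      rcases hx with hx | hx
      exacts [ihq hx, ihr hx]
  | seq q r ihq ihr =>
      simp only [polSem, Set.mem_iUnion, exists_prop] at hx
      obtain ⟨y, hy, hx⟩ := hx
      exact (ihq hy).trans (ihr hx)
  | star q ihq =>
      rw [mem_star_iff] at hx
      obtain ⟨i, hx⟩ := hx
      induction i generalizing h with
      | zero =>
          simp only [iterRel, Set.mem_singleton_iff] at hx
          rw [hx]
      | succ i ih =>
          simp only [iterRel, Set.mem_iUnion, exists_prop] at hx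
          obtain ⟨y, hy, hx⟩ := hx
          exact (ihq hy).trans (ih hx)
  | dup l =>
      rw [polSem, Set.mem_singleton_iff] at hx
      rw [hx]
      exact List.suffix_cons _ _

theorem mem_seq_iff {q r : LPol F L} {h x : Hist F} :
    x ∈ polSem (.seq q r) h ↔ ∃ y, y ∈ polSem q h ∧ x ∈ polSem r y := by
  show x ∈ ⋃ h' ∈ polSem q h, polSem r h' ↔ _
  simp
/-- Fundamental decomposition: `⟦p⟧ = ⟦E⟦p⟧⟧ ∪ ⋃_{(d,ℓ,k)∈D⟦p⟧} ⟦d · dupᵔ · k⟧`. -/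
theorem decomp (p : LPol F L) : ∀ h x : Hist F,
    x ∈ polSem p h ↔ x ∈ polSem (EE p) h ∨
      ∃ d l k, (d, l, k) ∈ DD p ∧ ∃ pk1 : Packet F,
        ((pk1, ([] : List (Packet F))) : Hist F) ∈ polSem d ((h.1, ([] : List (Packet F))) : Hist F) ∧
        x ∈ polSem k ((pk1, pk1 :: h.2) : Hist F) := by
  induction p with
  | filter a => intro h x; simp [EE, DD]
  | mod f n => intro h x; simp [EE, DD]
  | dup l =>
      intro h x
      simp only [polSem, EE, DD, predSem, Set.mem_singleton_iff, Finset.mem_singleton,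
        Set.mem_empty_iff_false, false_or]
      constructor
      · rintro rfl
        exact ⟨.filter .id, l, .filter .id, rfl, h.1, rfl, rfl⟩
      · rintro ⟨d, l', k, he, pk1, h1, h2⟩
        simp only [Prod.mk.injEq] at he
        obtain ⟨rfl, rfl, rfl⟩ := he
        simp only [polSem, predSem, Set.mem_singleton_iff, Prod.ext_iff] at h1 h2
        obtain ⟨rfl, -⟩ := h1
        exact Prod.ext h2.1 h2.2
  | union q r ihq ihr =>
      intro h x
      simp only [polSem, EE, Set.mem_union, DD, Finset.mem_union]
      constructor
      · rintro (hx | hx)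
        · rcases (ihq h x).1 hx with hE | ⟨d, l, k, ht, pk1, hd, hk⟩
          · exact Or.inl (Or.inl hE)
          · exact Or.inr ⟨d, l, k, Or.inl ht, pk1, hd, hk⟩
        · rcases (ihr h x).1 hx with hE | ⟨d, l, k, ht, pk1, hd, hk⟩
          · exact Or.inl (Or.inr hE)
          · exact Or.inr ⟨d, l, k, Or.inr ht, pk1, hd, hk⟩
      · rintro ((hE | hE) | ⟨d, l, k, (ht | ht), pk1, hd, hk⟩)
        · exact Or.inl ((ihq h x).2 (Or.inl hE))
        · exact Or.inr ((ihr h x).2 (Or.inl hE))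
        · exact Or.inl ((ihq h x).2 (Or.inr ⟨d, l, k, ht, pk1, hd, hk⟩))
        · exact Or.inr ((ihr h x).2 (Or.inr ⟨d, l, k, ht, pk1, hd, hk⟩))
  | seq q r ihq ihr =>
      intro h x
      simp only [polSem, EE, DD, Finset.mem_union, Finset.mem_image,
        Set.mem_iUnion, exists_prop]
      constructor
      · rintro ⟨y, hy, hx⟩
        rcases (ihq h y).1 hy with hyE | ⟨d, l, k, ht, pk1, hd, hk⟩
        · rcases (ihr y x).1 hx with hxE | ⟨d, l, k, ht, pk1, hd, hk⟩
          · exact Or.inl ⟨y, hyE, hxE⟩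
          · obtain ⟨hy2, hy1⟩ := (dupFree_tail (EE_dupFree q) h y).1 hyE
            refine Or.inr ⟨.seq (EE q) d, l, k,
              Or.inr ⟨(d, l, k), ht, rfl⟩, pk1, ?_, ?_⟩
            · exact Set.mem_iUnion.2 ⟨(y.1, []), by simpa using ⟨hy1, hd⟩⟩
            · rwa [hy2] at hk
        · refine Or.inr ⟨d, l, .seq k r, Or.inl ⟨(d, l, k), ht, rfl⟩, pk1, hd, ?_⟩
          simp only [polSem, Set.mem_iUnion, exists_prop]
          exact ⟨y, hk, hx⟩
      · rintro (hE | ⟨d', l, k', (⟨⟨d, l0, k0⟩, ht, he⟩ | ⟨⟨d, l0, k0⟩, ht, he⟩), pk1, hd, hk⟩)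
        · obtain ⟨y, hy, hx⟩ := hE
          exact ⟨y, (ihq h y).2 (Or.inl hy), (ihr y x).2 (Or.inl hx)⟩
        · cases he
          simp only [polSem, Set.mem_iUnion, exists_prop] at hk
          obtain ⟨y, hy, hx⟩ := hk
          exact ⟨y, (ihq h y).2 (Or.inr ⟨d, l0, k0, ht, pk1, hd, hy⟩), hx⟩
        · cases he
          simp only [polSem, Set.mem_iUnion, exists_prop] at hd
          obtain ⟨z, hz, hd1⟩ := hd
          obtain ⟨hz2, hz1⟩ := (dupFree_tail (EE_dupFree q) _ z).1 hz
          have hzq : (z.1, h.2) ∈ polSem q h :=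
            (ihq h (z.1, h.2)).2 (Or.inl ((dupFree_tail (EE_dupFree q) h (z.1, h.2)).2
              ⟨rfl, by simpa using hz1⟩))
          have hze : z = (z.1, ([] : List (Packet F))) := Prod.ext rfl hz2
          rw [hze] at hd1
          have hx : x ∈ polSem r (z.1, h.2) :=
            (ihr (z.1, h.2) x).2 (Or.inr ⟨d, l0, k0, ht, pk1, hd1, hk⟩)
          exact ⟨(z.1, h.2), hzq, hx⟩
  | star q ihq =>
      -- helper: ⟦(E q)*⟧ ⊆ ⟦q*⟧
      have hsub : ∀ h x : Hist F, x ∈ polSem (.star (EE q)) h → x ∈ polSem (.star q) h := by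
        intro h x hx
        rw [mem_star_iff] at hx ⊢
        obtain ⟨i, hx⟩ := hx
        refine ⟨i, ?_⟩
        induction i generalizing h with
        | zero => exact hx
        | succ i ih =>
            simp only [iterRel, Set.mem_iUnion, exists_prop] at hx ⊢
            obtain ⟨y, hy, hx⟩ := hx
            exact ⟨y, (ihq h y).2 (Or.inl hy), ih y hx⟩
      have hEstar : EE (.star q) = LPol.star (EE q) := rfl
      intro h x
      constructor
      · intro hx
        rw [mem_star_iff] at hx
        obtain ⟨i, hx⟩ := hx
        induction i generalizing h with
        | zero =>
            simp only [iterRel, Set.mem_singleton_iff] at hx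
            subst hx
            exact Or.inl (by rw [hEstar]; exact mem_star_self)
        | succ i ih =>
            simp only [iterRel, Set.mem_iUnion, exists_prop] at hx
            obtain ⟨y, hy, hx⟩ := hx
            rcases (ihq h y).1 hy with hyE | ⟨d, l, k, ht, pk1, hd, hk⟩
            · obtain ⟨hy2, hy1⟩ := (dupFree_tail (EE_dupFree q) h y).1 hyE
              rcases ih y hx with hE | ⟨d', l', k', hmem, pk2, hd', hk'⟩
              · refine Or.inl ?_
                rw [hEstar] at hE ⊢
                exact mem_star_step hyE hE
              · simp only [DD, Finset.mem_image] at hmem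
                obtain ⟨⟨d0, l0, k0⟩, ht0, he⟩ := hmem
                cases he
                refine Or.inr ⟨LPol.seq (EE (.star q)) d0, l0, LPol.seq k0 (.star q), by
                  simp only [DD, Finset.mem_image]; exact ⟨(d0, l0, k0), ht0, rfl⟩, pk2, ?_, ?_⟩
                · rw [mem_seq_iff] at hd' ⊢
                  obtain ⟨z, hz, hd2⟩ := hd'
                  rw [hEstar] at hz ⊢
                  exact ⟨z, mem_star_step hy1 hz, hd2⟩
                · rwa [hy2] at hk'
            · refine Or.inr ⟨LPol.seq (EE (.star q)) d, l, LPol.seq k (.star q), by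
                simp only [DD, Finset.mem_image]; exact ⟨(d, l, k), ht, rfl⟩, pk1, ?_, ?_⟩
              · rw [mem_seq_iff]
                refine ⟨(h.1, []), ?_, hd⟩
                rw [hEstar]
                exact mem_star_self
              · rw [mem_seq_iff]
                exact ⟨y, hk, mem_star_iff.2 ⟨i, hx⟩⟩
      · rintro (hE | ⟨d', l', k', hmem, pk1, hd, hk⟩)
        · exact hsub h x (by rwa [hEstar] at hE)
        · simp only [DD, Finset.mem_image] at hmem
          obtain ⟨⟨d0, l0, k0⟩, ht0, he⟩ := hmem
          cases he
          rw [mem_seq_iff] at hd hk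
          obtain ⟨z, hz, hd2⟩ := hd
          obtain ⟨y, hy, hx2⟩ := hk
          rw [hEstar] at hz
          obtain ⟨hz2, hz1⟩ := (dupFree_tail (by rw [← hEstar]; exact EE_dupFree (.star q)) _ z).1 hz
          have hze : z = (z.1, ([] : List (Packet F))) := Prod.ext rfl hz2
          rw [hze] at hd2
          have hzstar : (z.1, h.2) ∈ polSem (.star q) h := by
            refine hsub h _ ?_
            exact (dupFree_tail (by rw [← hEstar]; exact EE_dupFree (.star q)) h (z.1, h.2)).2
              ⟨rfl, by simpa using hz1⟩
          have hyq : y ∈ polSem q (z.1, h.2) :=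
            (ihq (z.1, h.2) y).2 (Or.inr ⟨d0, l0, k0, ht0, pk1, hd2, hy⟩)
          exact star_trans hzstar (mem_star_step hyq hx2)
theorem suffix_unique {α : Type*} {s1 s2 l : List α} (h1 : s1 <:+ l) (h2 : s2 <:+ l)
    (hl : s1.length = s2.length) : s1 = s2 := by
  obtain ⟨t1, rfl⟩ := h1
  obtain ⟨t2, he⟩ := h2
  have hlen : t2.length = t1.length := by
    have := congrArg List.length he
    simp only [List.length_append] at this
    omega
  exact ((List.append_inj he hlen).2).symm

theorem good {p : LPol F L} (hnd : (labelList p).Nodup) {κ : Option L → LPol F L}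
    (hκ0 : κ none = p) (hκ : ∀ l ∈ labelList p, ∃ d, (d, l, κ (some l)) ∈ DD p)
    {s : Option L} (hs : ∀ l, s = some l → l ∈ labelList p)
    {d : LPol F L} {l' : L} {k : LPol F L} (ht : (d, l', k) ∈ DD (κ s)) :
    l' ∈ labelList p ∧ k = κ (some l') := by
  have hp : ∃ d'', (d'', l', k) ∈ DD p := by
    cases s with
    | none => exact ⟨d, by rwa [hκ0] at ht⟩
    | some l =>
        obtain ⟨d0, hd0⟩ := hκ l (hs l rfl)
        exact DD_closure hd0 ht
  obtain ⟨d'', hp⟩ := hp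
  have hl' : l' ∈ labelList p := DD_label_mem hp
  obtain ⟨d1, hd1⟩ := hκ l' hl'
  exact ⟨hl', (DD_unique hnd hp hd1).2⟩

/-- **Strengthened automaton soundness** (the induction invariant of the Program
Automaton Soundness proof): for every state `s` of `A(p)` (i.e. `s` is the start state
`none`, or `some ℓ` for a label `ℓ` occurring in `p`) and every tail `h'`, the history
`(pk_out :: pk_n :: ⋯ :: pk₁) ++ h'` belongs to `⟦k_s⟧ (pk_in :: h')` iff
`accept s (pk_in, [pk₁, …, pk_n], pk_out)` holds. -/
theorem automaton_soundness_strong [Fintype F] (p : LPol F L)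
    (hnd : (labelList p).Nodup)
    (κ : Option L → LPol F L) (hκ0 : κ none = p)
    (hκ : ∀ l ∈ labelList p, ∃ d, (d, l, κ (some l)) ∈ DD p)
    (s : Option L) (hs : ∀ l, s = some l → l ∈ labelList p)
    (pkin pkout : Packet F) (w : List (Packet F)) (h' : List (Packet F)) :
    ((pkout, w.reverse ++ h') : Hist F) ∈ polSem (κ s) ((pkin, h') : Hist F)
      ↔ accept κ s pkin w pkout := by
  induction w generalizing s hs pkin h' with
  | nil =>
      simp only [List.reverse_nil, List.nil_append, accept, obs, Set.mem_setOf_eq]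
      constructor
      · intro hx
        rcases (decomp (κ s) (pkin, h') (pkout, h')).1 hx with hE | ⟨d, l, k, ht, pk1, hd, hk⟩
        · exact ((dupFree_tail (EE_dupFree _) _ _).1 hE).2
        · exfalso
          have hsuf := polSem_suffix hk
          have := hsuf.length_le
          simp only [List.length_cons] at this
          omega
      · intro hacc
        exact (decomp (κ s) (pkin, h') (pkout, h')).2
          (Or.inl ((dupFree_tail (EE_dupFree _) _ _).2 ⟨rfl, hacc⟩))
  | cons pk1 w ih =>
      simp only [List.reverse_cons, List.append_assoc, List.singleton_append, accept]
      constructor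
      · intro hx
        rcases (decomp (κ s) (pkin, h') _).1 hx with hE | ⟨d, l', k, ht, pk2, hd, hk⟩
        · exfalso
          have := ((dupFree_tail (EE_dupFree _) _ _).1 hE).1
          have hlen := congrArg List.length this
          simp only [List.length_append, List.length_cons] at hlen
          omega
        · have hsuf := polSem_suffix hk
          have h2 : pk2 :: h' = pk1 :: h' :=
            suffix_unique hsuf (List.suffix_append _ _) (by simp)
          have hpk : pk2 = pk1 := by injection h2
          subst hpk
          obtain ⟨hl', hkk⟩ := good hnd hκ0 hκ hs ht
          refine ⟨some l', ⟨l', d, k, rfl, ht, hd⟩, ?_⟩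
          exact (ih (some l') (fun l0 hl0 => by cases hl0; exact hl') pk2 (pk2 :: h')).1
            (by rw [← hkk]; exact hk)
      · rintro ⟨s', htr, hacc⟩
        obtain ⟨l', d, k, hs', ht, hd⟩ := htr
        subst hs'
        obtain ⟨hl', hkk⟩ := good hnd hκ0 hκ hs ht
        have hk : ((pkout, w.reverse ++ pk1 :: h') : Hist F) ∈
            polSem k ((pk1, pk1 :: h') : Hist F) := by
          rw [hkk]
          exact (ih (some l') (fun l0 hl0 => by cases hl0; exact hl') pk1 (pk1 :: h')).2 hacc
        exact (decomp (κ s) (pkin, h') _).2 (Or.inr ⟨d, l', k, ht, pk1, hd, hk⟩)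

end NetKAT
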